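/- Let K be a field of characteristic 2, and let x0, x1, x2, x3, p01, p02, p13, p23, dP ∈ K. Set X := [[x0, x2], [x1, x3]] and P := [[p23, p02], [p13, p01]] (2×2 matrices over K). Assume det P = dP^2 and dP*X = [[0, p02], [p13, 0]]*X + X*[[0, p23], [p01, 0]]. Then (det X)*P = [[0, x2^2], [x1^2, 0]]*P + P*[[0, x0^2], [x3^2, 0]]. -/

import Mathlib

/-- The duality (polarity) of the symplectic geometry underlying
the Suzuki group: incidence of a point X with an isotropic line (P, dP) implies
the dual incidence relation. -/
theorem suzuki_symplectic_polarity
    (K : Type*) [Field K] [CharP K 2]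
    (x0 x1 x2 x3 p01 p02 p13 p23 dP : K)
    (X P : Matrix (Fin 2) (Fin 2) K)
    (hX : X = !![x0, x2; x1, x3])
    (hP : P = !![p23, p02; p13, p01])
    (hdet : P.det = dP ^ 2)
    (hinc : dP • X = !![(0 : K), p02; p13, 0] * X + X * !![(0 : K), p23; p01, 0]) :
    X.det • P = !![(0 : K), x2 ^ 2; x1 ^ 2, 0] * P + P * !![(0 : K), x0 ^ 2; x3 ^ 2, 0] := by
  subst hX hP
  have h2 : (2 : K) = 0 := by
    simpa using (CharP.cast_eq_zero K 2)
  have h00 := congrFun (congrFun hinc 0) 0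
  have h01 := congrFun (congrFun hinc 0) 1
  have h10 := congrFun (congrFun hinc 1) 0
  have h11 := congrFun (congrFun hinc 1) 1
  simp [Matrix.mul_apply, Fin.sum_univ_two, Matrix.smul_apply] at h00 h01 h10 h11
  simp [Matrix.det_fin_two] 
  refine ⟨⟨?_, ?_⟩, ?_, ?_⟩
  · linear_combination -x3*h01 - x2*h11 + (dP*x2*x3 - x1*x2*p23 - x2^2*p13 - x3^2*p02)*h2
  · linear_combination -x0*h01 - x2*h00 + (dP*x0*x2 - p02*x1*x2 - x2^2*p01 - x0^2*p23)*h2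
  · linear_combination -x1*h11 - x3*h10 + (dP*x1*x3 - p13*x1*x2 - x1^2*p23 - x3^2*p01)*h2
  · linear_combination -x0*h10 - x1*h00 + (dP*x0*x1 - p01*x1*x2 - x1^2*p02 - x0^2*p13)*h2
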